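/- Let a_0 ≤ a_1 ≤ ⋯ ≤ a_n be real numbers with a_0 < a_n, let c_{a_0}, …, c_{a_n} > 0, let l > 0, and let β_{a_i}(t) = c_{a_i} (l(t − a_0))^{l(a_i − a_0)} (l(a_n − t))^{l(a_n − a_i)} be the GT-Bernstein basis functions. Let a_0 < t_0 < t_1 < ⋯ < t_n < a_n be an increasing sequence, set x_i = (t_i − a_0)/(a_n − t_i) and k_i = a_i − a_0 for i = 0, 1, …, n, and let B = [β_{a_j}(t_i)]_{i,j=0}^{n} be the collocation matrix and A = [x_i^{l·k_j}]_{i,j=0}^{n}. Then B is a totally positive matrix if and only if A is a totally positive matrix. -/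

import Mathlib

/-- A real matrix is totally positive if every minor (determinant of the submatrix
obtained by selecting rows `r 0 < r 1 < ⋯` and columns `c 0 < c 1 < ⋯`) is
nonnegative. -/
def IsTotallyPositive {N M : ℕ} (A : Matrix (Fin N) (Fin M) ℝ) : Prop :=
  ∀ (k : ℕ) (r : Fin k → Fin N) (c : Fin k → Fin M),
    StrictMono r → StrictMono c → 0 ≤ (A.submatrix r c).det

/-- The GT-Bernstein basis functions
`β_{a_i}(t) = c_{a_i} (l(t − a_0))^{l(a_i − a_0)} (l(a_n − t))^{l(a_n − a_i)}`,
where powers are real powers (`Real.rpow`, which satisfies `0 ^ 0 = 1`). -/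
noncomputable def gtBernstein (n : ℕ) (a c : Fin (n + 1) → ℝ) (l : ℝ)
    (i : Fin (n + 1)) (t : ℝ) : ℝ :=
  c i * (l * (t - a 0)) ^ (l * (a i - a 0)) *
    (l * (a (Fin.last n) - t)) ^ (l * (a (Fin.last n) - a i))

/-- Scaling rows and columns by positive factors preserves total positivity (iff). -/
lemma scale_TP {N : ℕ} (d e : Fin N → ℝ) (hd : ∀ i, 0 < d i) (he : ∀ j, 0 < e j)
    (A : Matrix (Fin N) (Fin N) ℝ) :
    IsTotallyPositive (Matrix.of fun i j => d i * e j * A i j) ↔ IsTotallyPositive A := by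
  have key : ∀ (k : ℕ) (r c : Fin k → Fin N),
      ((Matrix.of fun i j => d i * e j * A i j).submatrix r c).det
        = ((∏ i, d (r i)) * ∏ i, e (c i)) * (A.submatrix r c).det := by
    intro k r c
    have : (Matrix.of fun i j => d i * e j * A i j).submatrix r c
        = Matrix.of fun i j => d (r i) * (Matrix.of fun i j => e (c j) * (A.submatrix r c) i j) i j := by
      ext i j; simp [Matrix.submatrix]; ring
    rw [this, Matrix.det_mul_column, Matrix.det_mul_row]; ring
  constructor
  · intro h k r c hr hc
    have := h k r c hr hc
    rw [key] at this
    exact nonneg_of_mul_nonneg_right this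
      (mul_pos (Finset.prod_pos fun i _ => hd (r i)) (Finset.prod_pos fun i _ => he (c i)))
  · intro h k r c hr hc
    rw [key k r c]
    exact mul_nonneg (mul_pos (Finset.prod_pos fun i _ => hd (r i)) (Finset.prod_pos fun i _ => he (c i))).le (h k r c hr hc)

theorem gtBernstein_collocation_TP_iff
    (n : ℕ) (a c : Fin (n + 1) → ℝ) (l : ℝ)
    (ha : Monotone a) (ha' : a 0 < a (Fin.last n))
    (hc : ∀ i, 0 < c i) (hl : 0 < l)
    (t : Fin (n + 1) → ℝ) (ht : StrictMono t)
    (ht0 : a 0 < t 0) (htn : t (Fin.last n) < a (Fin.last n)) :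
    IsTotallyPositive
        (Matrix.of fun i j : Fin (n + 1) => gtBernstein n a c l j (t i)) ↔
      IsTotallyPositive
        (Matrix.of fun i j : Fin (n + 1) =>
          ((t i - a 0) / (a (Fin.last n) - t i)) ^ (l * (a j - a 0))) := by
  set an := a (Fin.last n) with han
  have hti : ∀ i, a 0 < t i := fun i =>
    lt_of_lt_of_le ht0 (ht.monotone (Fin.zero_le i))
  have hti' : ∀ i, t i < an := fun i =>
    lt_of_le_of_lt (ht.monotone (Fin.le_last i)) htn
  have hB : ∀ i j : Fin (n + 1),
      gtBernstein n a c l j (t i)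
        = ((l * (an - t i)) ^ (l * (an - a 0))) * c j *
            ((t i - a 0) / (an - t i)) ^ (l * (a j - a 0)) := by
    intro i j
    have h1 : (0:ℝ) < an - t i := sub_pos.2 (hti' i)
    have h2 : (0:ℝ) < t i - a 0 := sub_pos.2 (hti i)
    have hx : (0:ℝ) ≤ (t i - a 0) / (an - t i) := le_of_lt (div_pos h2 h1)
    have hfact : l * (t i - a 0) = ((t i - a 0) / (an - t i)) * (l * (an - t i)) := by
      field_simp
    rw [gtBernstein, hfact, Real.mul_rpow hx (by positivity),
      ← han]
    rw [mul_assoc, mul_assoc, ← Real.rpow_add (by positivity : (0:ℝ) < l * (an - t i))]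
    have : l * (a j - a 0) + l * (an - a j) = l * (an - a 0) := by ring
    rw [this]; ring
  have hrw : (Matrix.of fun i j : Fin (n + 1) => gtBernstein n a c l j (t i))
      = Matrix.of fun i j => ((l * (an - t i)) ^ (l * (an - a 0))) * c j *
          (Matrix.of fun i j : Fin (n + 1) =>
            ((t i - a 0) / (an - t i)) ^ (l * (a j - a 0))) i j := by
    ext i j; simpa using hB i j
  rw [hrw]
  exact scale_TP _ c
    (fun i => Real.rpow_pos_of_pos (mul_pos hl (sub_pos.2 (hti' i))) _) hc _
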